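/- Let S = P_S ∪ L_S be a resolving set for a biaffine plane of order q with |P_S| ≤ |L_S|, let u be the number of uncovered directions and c the number of unblocked classes. If |S| < 3(q−1) then u ≤ 2; if |S| < (8/3)(q−1) then u ≤ 1; if |S| < (8/3)(q−1) − 1 then c ≤ 4. -/

import Mathlib

open Set

/-- The bipartite point-line incidence graph of an incidence relation `I`. -/
def IncGraph {Pt Ln : Type*} (I : Pt → Ln → Prop) : SimpleGraph (Pt ⊕ Ln) where
  Adj x y := (∃ p l, x = Sum.inl p ∧ y = Sum.inr l ∧ I p l) ∨
             (∃ p l, x = Sum.inr l ∧ y = Sum.inl p ∧ I p l)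
  symm := by
    constructor
    rintro x y (⟨p, l, hx, hy, h⟩ | ⟨p, l, hx, hy, h⟩)
    · exact Or.inr ⟨p, l, hy, hx, h⟩
    · exact Or.inl ⟨p, l, hy, hx, h⟩
  loopless := by
    constructor
    rintro x (⟨p, l, hx, hy, h⟩ | ⟨p, l, hx, hy, h⟩) <;> subst hx <;> simp_all

/-- A set of vertices is a resolving set if every vertex is determined
by its distances to the elements of `S`. -/
def IsResolvingSet {V : Type*} (G : SimpleGraph V) (S : Set V) : Prop :=
  ∀ x y : V, (∀ s ∈ S, G.dist x s = G.dist y s) → x = y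

/-- A biaffine plane of order `q` (an affine plane with one parallel class of lines
removed), together with its partition into `q` parallel classes of lines (given by
`dir`, the direction) and `q` non-adjacency classes of points (given by `cls`):
`q²` points and `q²` lines, each point on `q` lines, each line with `q` points,
two points on at most one common line; two lines are in the same parallel class iff
they are equal or disjoint; two points are in the same non-adjacency class iff they
are equal or non-collinear; and for every non-incident point-line pair `(p, l)` there
is exactly one line through `p` missing `l` and exactly one point of `l` not
collinear with `p`. -/
def IsBiaffinePlane {Pt Ln : Type*} (q : ℕ) (I : Pt → Ln → Prop)
    (dir : Ln → Fin q) (cls : Pt → Fin q) : Prop :=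
  Nat.card Pt = q ^ 2 ∧ Nat.card Ln = q ^ 2 ∧
  (∀ l, {p | I p l}.ncard = q) ∧
  (∀ p, {l | I p l}.ncard = q) ∧
  (∀ p₁ p₂ : Pt, p₁ ≠ p₂ → {l | I p₁ l ∧ I p₂ l}.ncard ≤ 1) ∧
  (∀ l₁ l₂ : Ln, dir l₁ = dir l₂ ↔ (l₁ = l₂ ∨ ∀ p, ¬ (I p l₁ ∧ I p l₂))) ∧
  (∀ p₁ p₂ : Pt, cls p₁ = cls p₂ ↔ (p₁ = p₂ ∨ ∀ l, ¬ (I p₁ l ∧ I p₂ l))) ∧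
  (∀ p l, ¬ I p l →
    (∃! l', I p l' ∧ ∀ p', ¬ (I p' l ∧ I p' l')) ∧
    (∃! p', I p' l ∧ ∀ l', ¬ (I p l' ∧ I p' l')))

section Aux

variable {Pt Ln : Type*} {I : Pt → Ln → Prop}

lemma adj_inl_inr {p : Pt} {l : Ln} : (IncGraph I).Adj (Sum.inl p) (Sum.inr l) ↔ I p l := by
  constructor
  · rintro (⟨p', l', hx, hy, h⟩ | ⟨p', l', hx, hy, h⟩) <;> simp_all
  · intro h; exact Or.inl ⟨p, l, rfl, rfl, h⟩

lemma adj_inr_inl {p : Pt} {l : Ln} : (IncGraph I).Adj (Sum.inr l) (Sum.inl p) ↔ I p l := by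
  rw [(IncGraph I).adj_comm]; exact adj_inl_inr

lemma not_adj_inl_inl {p p' : Pt} : ¬ (IncGraph I).Adj (Sum.inl p) (Sum.inl p') := by
  rintro (⟨a, b, hx, hy, h⟩ | ⟨a, b, hx, hy, h⟩) <;> simp_all

lemma not_adj_inr_inr {l l' : Ln} : ¬ (IncGraph I).Adj (Sum.inr l) (Sum.inr l') := by
  rintro (⟨a, b, hx, hy, h⟩ | ⟨a, b, hx, hy, h⟩) <;> simp_all

lemma adj_isLeft {x y : Pt ⊕ Ln} (h : (IncGraph I).Adj x y) : x.isLeft = !y.isLeft := by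
  rcases h with ⟨p, l, hx, hy, _⟩ | ⟨p, l, hx, hy, _⟩ <;> subst hx <;> subst hy <;> rfl

lemma walk_parity {x y : Pt ⊕ Ln} (w : (IncGraph I).Walk x y) :
    Even w.length ↔ x.isLeft = y.isLeft := by
  induction w with
  | nil => simp
  | @cons a b c h w ih =>
    rw [SimpleGraph.Walk.length_cons, Nat.even_add_one, ih, adj_isLeft h]
    cases hb : b.isLeft <;> cases hc : c.isLeft <;> simp [hb, hc]

lemma exists_line_meeting {q : ℕ} {dir : Ln → Fin q} {cls : Pt → Fin q}
    (hBA : IsBiaffinePlane q I dir cls) (hq : 2 ≤ q) {p : Pt} {l : Ln} (h : ¬ I p l) :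
    ∃ m p', I p m ∧ I p' m ∧ I p' l := by
  obtain ⟨l₀, ⟨hl₀p, hl₀miss⟩, huniq⟩ := (hBA.2.2.2.2.2.2.2 p l h).1
  have hcard : 1 < {l' | I p l'}.ncard := by
    rw [hBA.2.2.2.1 p]; omega
  obtain ⟨m, hm, hmne⟩ := Set.exists_ne_of_one_lt_ncard hcard l₀
  refine ⟨m, ?_⟩
  by_contra hc
  push_neg at hc
  refine hmne (huniq m ⟨hm, fun p' hpair => ?_⟩)
  exact hc p' hm hpair.2 hpair.1

lemma line_nonempty {q : ℕ} {dir : Ln → Fin q} {cls : Pt → Fin q}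
    (hBA : IsBiaffinePlane q I dir cls) (hq : 2 ≤ q) (l : Ln) : ∃ p, I p l := by
  have := hBA.2.2.1 l
  obtain ⟨p, hp⟩ := Set.nonempty_of_ncard_ne_zero (s := {p | I p l}) (by omega)
  exact ⟨p, hp⟩

lemma dist_pl_inc {p : Pt} {l : Ln} (h : I p l) :
    (IncGraph I).dist (Sum.inl p) (Sum.inr l) = 1 :=
  SimpleGraph.dist_eq_one_iff_adj.mpr (adj_inl_inr.mpr h)

lemma dist_pl_not_inc {q : ℕ} {dir : Ln → Fin q} {cls : Pt → Fin q}
    (hBA : IsBiaffinePlane q I dir cls) (hq : 2 ≤ q) {p : Pt} {l : Ln} (h : ¬ I p l) :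
    (IncGraph I).dist (Sum.inl p) (Sum.inr l) = 3 := by
  obtain ⟨m, p', hpm, hp'm, hp'l⟩ := exists_line_meeting hBA hq h
  let W : (IncGraph I).Walk (Sum.inl p) (Sum.inr l) :=
    .cons (adj_inl_inr.mpr hpm) (.cons (adj_inr_inl.mpr hp'm)
      (.cons (adj_inl_inr.mpr hp'l) .nil))
  have hle : (IncGraph I).dist (Sum.inl p) (Sum.inr l) ≤ 3 := SimpleGraph.dist_le W
  have hnz : (IncGraph I).dist (Sum.inl p) (Sum.inr l) ≠ 0 := by
    rw [SimpleGraph.dist_ne_zero_iff_ne_and_reachable]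
    exact ⟨by simp, W.reachable⟩
  have hne1 : (IncGraph I).dist (Sum.inl p) (Sum.inr l) ≠ 1 := fun h1 =>
    h (adj_inl_inr.mp (SimpleGraph.dist_eq_one_iff_adj.mp h1))
  obtain ⟨w, hw⟩ := SimpleGraph.exists_walk_of_dist_ne_zero hnz
  have hodd : ¬ Even w.length := by rw [walk_parity]; simp
  rw [Nat.not_even_iff] at hodd
  omega

lemma dist_ll_meet {l₁ l₂ : Ln} (hne : l₁ ≠ l₂) {p : Pt} (h1 : I p l₁) (h2 : I p l₂) :
    (IncGraph I).dist (Sum.inr l₁) (Sum.inr l₂) = 2 := by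
  let W : (IncGraph I).Walk (Sum.inr l₁) (Sum.inr l₂) :=
    .cons (adj_inr_inl.mpr h1) (.cons (adj_inl_inr.mpr h2) .nil)
  have hle : (IncGraph I).dist (Sum.inr l₁) (Sum.inr l₂) ≤ 2 := SimpleGraph.dist_le W
  have hnz : (IncGraph I).dist (Sum.inr l₁) (Sum.inr l₂) ≠ 0 := by
    rw [SimpleGraph.dist_ne_zero_iff_ne_and_reachable]
    exact ⟨by simp [hne], W.reachable⟩
  obtain ⟨w, hw⟩ := SimpleGraph.exists_walk_of_dist_ne_zero hnz
  have heven : Even w.length := by rw [walk_parity]; rfl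
  rw [Nat.even_iff] at heven
  omega

lemma dist_pp_meet {p₁ p₂ : Pt} (hne : p₁ ≠ p₂) {l : Ln} (h1 : I p₁ l) (h2 : I p₂ l) :
    (IncGraph I).dist (Sum.inl p₁) (Sum.inl p₂) = 2 := by
  let W : (IncGraph I).Walk (Sum.inl p₁) (Sum.inl p₂) :=
    .cons (adj_inl_inr.mpr h1) (.cons (adj_inr_inl.mpr h2) .nil)
  have hle : (IncGraph I).dist (Sum.inl p₁) (Sum.inl p₂) ≤ 2 := SimpleGraph.dist_le W
  have hnz : (IncGraph I).dist (Sum.inl p₁) (Sum.inl p₂) ≠ 0 := by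
    rw [SimpleGraph.dist_ne_zero_iff_ne_and_reachable]
    exact ⟨by simp [hne], W.reachable⟩
  obtain ⟨w, hw⟩ := SimpleGraph.exists_walk_of_dist_ne_zero hnz
  have heven : Even w.length := by rw [walk_parity]; rfl
  rw [Nat.even_iff] at heven
  omega

lemma dist_ll_disj {q : ℕ} {dir : Ln → Fin q} {cls : Pt → Fin q}
    (hBA : IsBiaffinePlane q I dir cls) (hq : 2 ≤ q) {l₁ l₂ : Ln} (hne : l₁ ≠ l₂)
    (hdisj : ∀ p, ¬ (I p l₁ ∧ I p l₂)) :
    (IncGraph I).dist (Sum.inr l₁) (Sum.inr l₂) = 4 := by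
  obtain ⟨p, hp⟩ := line_nonempty hBA hq l₁
  have hp2 : ¬ I p l₂ := fun h => hdisj p ⟨hp, h⟩
  obtain ⟨m, p', hpm, hp'm, hp'l⟩ := exists_line_meeting hBA hq hp2
  let W : (IncGraph I).Walk (Sum.inr l₁) (Sum.inr l₂) :=
    .cons (adj_inr_inl.mpr hp) (.cons (adj_inl_inr.mpr hpm)
      (.cons (adj_inr_inl.mpr hp'm) (.cons (adj_inl_inr.mpr hp'l) .nil)))
  have hle : (IncGraph I).dist (Sum.inr l₁) (Sum.inr l₂) ≤ 4 := SimpleGraph.dist_le W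
  have hnz : (IncGraph I).dist (Sum.inr l₁) (Sum.inr l₂) ≠ 0 := by
    rw [SimpleGraph.dist_ne_zero_iff_ne_and_reachable]
    exact ⟨by simp [hne], W.reachable⟩
  have hne2 : (IncGraph I).dist (Sum.inr l₁) (Sum.inr l₂) ≠ 2 := by
    intro h2
    obtain ⟨w, hw⟩ := SimpleGraph.exists_walk_of_dist_ne_zero hnz
    rw [h2] at hw
    cases w with
    | nil => simp at hw
    | cons h w' =>
      cases w' with
      | nil => simp at hw
      | cons h' w'' =>
        cases w'' with
        | nil =>
          rcases h with ⟨a, b, hx, hy, hI⟩ | ⟨a, b, hx, hy, hI⟩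
          · simp at hx
          · injection hx with hx
            subst hx; subst hy
            exact hdisj a ⟨hI, adj_inl_inr.mp h'⟩
        | cons h'' w''' => simp [SimpleGraph.Walk.length_cons] at hw
  obtain ⟨w, hw⟩ := SimpleGraph.exists_walk_of_dist_ne_zero hnz
  have heven : Even w.length := by rw [walk_parity]; rfl
  rw [Nat.even_iff] at heven
  omega

end Aux
open scoped Classical in
lemma auxSumCardFilterComm {α β : Type*} (s : Finset α) (t : Finset β) (r : α → β → Prop) :
    ∑ a ∈ s, (t.filter (fun b => r a b)).card = ∑ b ∈ t, (s.filter (fun a => r a b)).card := by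
  simp only [Finset.card_filter]
  exact Finset.sum_comm

open scoped Classical in
lemma auxFilterCardEq {α : Type*} [Fintype α] (p : α → Prop) [DecidablePred p] :
    {x | p x}.ncard = (Finset.univ.filter p).card := by
  rw [Set.ncard_eq_toFinset_card', Set.toFinset_setOf]

section Comb

open Finset
open scoped Classical
set_option linter.unusedSectionVars false

variable {Pt Ln : Type*} [Fintype Pt] [Fintype Ln] {q : ℕ} {I : Pt → Ln → Prop}
  {dir : Ln → Fin q} {cls : Pt → Fin q}

lemma card_univ_Pt (hBA : IsBiaffinePlane q I dir cls) :
    (Finset.univ : Finset Pt).card = q ^ 2 := by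
  have := hBA.1; rwa [Nat.card_eq_fintype_card, ← Finset.card_univ] at this

lemma card_univ_Ln (hBA : IsBiaffinePlane q I dir cls) :
    (Finset.univ : Finset Ln).card = q ^ 2 := by
  have := hBA.2.1; rwa [Nat.card_eq_fintype_card, ← Finset.card_univ] at this

lemma card_pts_on_line (hBA : IsBiaffinePlane q I dir cls) (l : Ln) :
    (Finset.univ.filter (fun p => I p l)).card = q := by
  have := hBA.2.2.1 l; rwa [auxFilterCardEq] at this

lemma card_lns_thru_pt (hBA : IsBiaffinePlane q I dir cls) (p : Pt) :
    (Finset.univ.filter (fun l => I p l)).card = q := by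
  have := hBA.2.2.2.1 p; rwa [auxFilterCardEq] at this

lemma line_thru_dir (hBA : IsBiaffinePlane q I dir cls) (p : Pt) (d : Fin q) :
    ∃! l, I p l ∧ dir l = d := by
  set Lp := Finset.univ.filter (fun l => I p l) with hLp
  have hinj : Set.InjOn dir (Lp : Set Ln) := by
    intro l₁ h₁ l₂ h₂ hd
    rcases (hBA.2.2.2.2.2.1 l₁ l₂).mp hd with h | h
    · exact h
    · exact absurd ⟨(Finset.mem_filter.mp h₁).2, (Finset.mem_filter.mp h₂).2⟩ (h p)
  have himg : Lp.image dir = Finset.univ := by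
    apply Finset.eq_of_subset_of_card_le (Finset.subset_univ _)
    rw [Finset.card_image_of_injOn hinj, card_lns_thru_pt hBA p, Finset.card_univ,
      Fintype.card_fin]
  have hd : d ∈ Lp.image dir := by rw [himg]; exact Finset.mem_univ d
  obtain ⟨l, hl, hld⟩ := Finset.mem_image.mp hd
  refine ⟨l, ⟨(Finset.mem_filter.mp hl).2, hld⟩, ?_⟩
  rintro l' ⟨hl', hl'd⟩
  exact hinj (by simp [hLp, hl']) (by exact_mod_cast hl) (by rw [hl'd, hld])

lemma pt_on_cls (hBA : IsBiaffinePlane q I dir cls) (l : Ln) (d : Fin q) :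
    ∃! p, I p l ∧ cls p = d := by
  set Pl := Finset.univ.filter (fun p => I p l) with hPl
  have hinj : Set.InjOn cls (Pl : Set Pt) := by
    intro p₁ h₁ p₂ h₂ hd
    rcases (hBA.2.2.2.2.2.2.1 p₁ p₂).mp hd with h | h
    · exact h
    · exact absurd ⟨(Finset.mem_filter.mp h₁).2, (Finset.mem_filter.mp h₂).2⟩ (h l)
  have himg : Pl.image cls = Finset.univ := by
    apply Finset.eq_of_subset_of_card_le (Finset.subset_univ _)
    rw [Finset.card_image_of_injOn hinj, card_pts_on_line hBA l, Finset.card_univ,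
      Fintype.card_fin]
  have hd : d ∈ Pl.image cls := by rw [himg]; exact Finset.mem_univ d
  obtain ⟨p, hp, hpd⟩ := Finset.mem_image.mp hd
  refine ⟨p, ⟨(Finset.mem_filter.mp hp).2, hpd⟩, ?_⟩
  rintro p' ⟨hp', hp'd⟩
  exact hinj (by simp [hPl, hp']) (by exact_mod_cast hp) (by rw [hp'd, hpd])

lemma card_dir_fiber (hBA : IsBiaffinePlane q I dir cls) (hq : 2 ≤ q) (d : Fin q) :
    (Finset.univ.filter (fun l => dir l = d)).card = q := by
  set F := Finset.univ.filter (fun l : Ln => dir l = d) with hF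
  have key : ∑ l ∈ F, (Finset.univ.filter (fun p => I p l)).card
      = ∑ p ∈ (Finset.univ : Finset Pt), (F.filter (fun l => I p l)).card :=
    auxSumCardFilterComm F Finset.univ (fun l p => I p l)
  have h1 : ∑ l ∈ F, (Finset.univ.filter (fun p => I p l)).card = F.card * q := by
    rw [Finset.sum_congr rfl (fun l _ => card_pts_on_line hBA l), Finset.sum_const,
      smul_eq_mul]
  have h2 : ∀ p : Pt, (F.filter (fun l => I p l)).card = 1 := by
    intro p
    obtain ⟨l₀, ⟨hl₀I, hl₀d⟩, huniq⟩ := line_thru_dir hBA p d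
    rw [Finset.card_eq_one]
    refine ⟨l₀, ?_⟩
    ext l
    simp only [Finset.mem_filter, Finset.mem_univ, true_and, Finset.mem_singleton, hF]
    constructor
    · rintro ⟨hld, hlI⟩; exact huniq l ⟨hlI, hld⟩
    · rintro rfl; exact ⟨hl₀d, hl₀I⟩
  have h3 : ∑ p ∈ (Finset.univ : Finset Pt), (F.filter (fun l => I p l)).card = q ^ 2 := by
    rw [Finset.sum_congr rfl (fun p _ => h2 p), Finset.sum_const, smul_eq_mul, mul_one,
      card_univ_Pt hBA]
  have : F.card * q = q ^ 2 := by rw [← h1, key, h3]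
  have hq0 : 0 < q := by omega
  nlinarith [this]

lemma card_cls_fiber (hBA : IsBiaffinePlane q I dir cls) (hq : 2 ≤ q) (d : Fin q) :
    (Finset.univ.filter (fun p => cls p = d)).card = q := by
  set F := Finset.univ.filter (fun p : Pt => cls p = d) with hF
  have key : ∑ p ∈ F, (Finset.univ.filter (fun l => I p l)).card
      = ∑ l ∈ (Finset.univ : Finset Ln), (F.filter (fun p => I p l)).card :=
    auxSumCardFilterComm F Finset.univ (fun p l => I p l)
  have h1 : ∑ p ∈ F, (Finset.univ.filter (fun l => I p l)).card = F.card * q := by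
    rw [Finset.sum_congr rfl (fun p _ => card_lns_thru_pt hBA p), Finset.sum_const,
      smul_eq_mul]
  have h2 : ∀ l : Ln, (F.filter (fun p => I p l)).card = 1 := by
    intro l
    obtain ⟨p₀, ⟨hp₀I, hp₀d⟩, huniq⟩ := pt_on_cls hBA l d
    rw [Finset.card_eq_one]
    refine ⟨p₀, ?_⟩
    ext p
    simp only [Finset.mem_filter, Finset.mem_univ, true_and, Finset.mem_singleton, hF]
    constructor
    · rintro ⟨hpd, hpI⟩; exact huniq p ⟨hpI, hpd⟩
    · rintro rfl; exact ⟨hp₀d, hp₀I⟩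
  have h3 : ∑ l ∈ (Finset.univ : Finset Ln), (F.filter (fun p => I p l)).card = q ^ 2 := by
    rw [Finset.sum_congr rfl (fun l _ => h2 l), Finset.sum_const, smul_eq_mul, mul_one,
      card_univ_Ln hBA]
  have : F.card * q = q ^ 2 := by rw [← h1, key, h3]
  have hq0 : 0 < q := by omega
  nlinarith [this]

end Comb


section Res
set_option linter.unusedSectionVars false

variable {Pt Ln : Type*} [Fintype Pt] [Fintype Ln] {q : ℕ} {I : Pt → Ln → Prop}
  {dir : Ln → Fin q} {cls : Pt → Fin q} {PS : Set Pt} {LS : Set Ln}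

lemma dist_of_dir_ne (hBA : IsBiaffinePlane q I dir cls) {m l : Ln} (hd : dir l ≠ dir m) :
    (IncGraph I).dist (Sum.inr m) (Sum.inr l) = 2 := by
  have hnot : ¬ (m = l ∨ ∀ p, ¬ (I p m ∧ I p l)) := fun hor =>
    hd (((hBA.2.2.2.2.2.1 m l).mpr hor).symm)
  push_neg at hnot
  obtain ⟨hne, p, hpm, hpl⟩ := hnot
  exact dist_ll_meet hne hpm hpl

lemma dist_of_cls_ne (hBA : IsBiaffinePlane q I dir cls) {p p' : Pt} (hd : cls p ≠ cls p') :
    (IncGraph I).dist (Sum.inl p') (Sum.inl p) = 2 := by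
  have hnot : ¬ (p' = p ∨ ∀ l, ¬ (I p' l ∧ I p l)) := fun hor =>
    hd (((hBA.2.2.2.2.2.2.1 p' p).mpr hor).symm)
  push_neg at hnot
  obtain ⟨hne, l, hp'l, hpl⟩ := hnot
  exact dist_pp_meet hne hp'l hpl

lemma resolve_lines (hBA : IsBiaffinePlane q I dir cls) (hq : 2 ≤ q)
    (hres : IsResolvingSet (IncGraph I) (Sum.inl '' PS ∪ Sum.inr '' LS))
    {m₁ m₂ : Ln} (h1 : ∀ l ∈ LS, dir l ≠ dir m₁) (h2 : ∀ l ∈ LS, dir l ≠ dir m₂)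
    (htr : ∀ p ∈ PS, (I p m₁ ↔ I p m₂)) : m₁ = m₂ := by
  have key : (Sum.inr m₁ : Pt ⊕ Ln) = Sum.inr m₂ := by
    apply hres
    rintro s (⟨p, hp, rfl⟩ | ⟨l, hl, rfl⟩)
    · by_cases hpi : I p m₁
      · rw [SimpleGraph.dist_comm, dist_pl_inc hpi, SimpleGraph.dist_comm,
          dist_pl_inc ((htr p hp).mp hpi)]
      · rw [SimpleGraph.dist_comm, dist_pl_not_inc hBA hq hpi, SimpleGraph.dist_comm,
          dist_pl_not_inc hBA hq (fun h => hpi ((htr p hp).mpr h))]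
    · rw [dist_of_dir_ne hBA (h1 l hl), dist_of_dir_ne hBA (h2 l hl)]
  exact Sum.inr.inj key

lemma resolve_untouched (hBA : IsBiaffinePlane q I dir cls) (hq : 2 ≤ q)
    (hres : IsResolvingSet (IncGraph I) (Sum.inl '' PS ∪ Sum.inr '' LS))
    {m₁ m₂ : Ln} (hn1 : m₁ ∉ LS) (hn2 : m₂ ∉ LS) (hd : dir m₁ = dir m₂)
    (hP1 : ∀ p ∈ PS, ¬ I p m₁) (hP2 : ∀ p ∈ PS, ¬ I p m₂) : m₁ = m₂ := by
  have key : (Sum.inr m₁ : Pt ⊕ Ln) = Sum.inr m₂ := by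
    apply hres
    rintro s (⟨p, hp, rfl⟩ | ⟨l, hl, rfl⟩)
    · rw [SimpleGraph.dist_comm, dist_pl_not_inc hBA hq (hP1 p hp), SimpleGraph.dist_comm,
        dist_pl_not_inc hBA hq (hP2 p hp)]
    · by_cases hdl : dir l = dir m₁
      · have hne1 : m₁ ≠ l := fun h => hn1 (h ▸ hl)
        have hne2 : m₂ ≠ l := fun h => hn2 (h ▸ hl)
        have disj1 : ∀ p, ¬ (I p m₁ ∧ I p l) := by
          rcases (hBA.2.2.2.2.2.1 m₁ l).mp hdl.symm with he | hdisj
          · exact absurd he hne1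
          · exact hdisj
        have disj2 : ∀ p, ¬ (I p m₂ ∧ I p l) := by
          rcases (hBA.2.2.2.2.2.1 m₂ l).mp (hd ▸ hdl.symm : dir m₂ = dir l) with he | hdisj
          · exact absurd he hne2
          · exact hdisj
        rw [dist_ll_disj hBA hq hne1 disj1, dist_ll_disj hBA hq hne2 disj2]
      · have hdl2 : dir l ≠ dir m₂ := fun h => hdl (h.trans hd.symm)
        rw [dist_of_dir_ne hBA hdl, dist_of_dir_ne hBA hdl2]
  exact Sum.inr.inj key

lemma resolve_points (hBA : IsBiaffinePlane q I dir cls) (hq : 2 ≤ q)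
    (hres : IsResolvingSet (IncGraph I) (Sum.inl '' PS ∪ Sum.inr '' LS))
    {p₁ p₂ : Pt} (h1 : ∀ p ∈ PS, cls p ≠ cls p₁) (h2 : ∀ p ∈ PS, cls p ≠ cls p₂)
    (htr : ∀ l ∈ LS, (I p₁ l ↔ I p₂ l)) : p₁ = p₂ := by
  have key : (Sum.inl p₁ : Pt ⊕ Ln) = Sum.inl p₂ := by
    apply hres
    rintro s (⟨p, hp, rfl⟩ | ⟨l, hl, rfl⟩)
    · rw [dist_of_cls_ne hBA (h1 p hp), dist_of_cls_ne hBA (h2 p hp)]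
    · by_cases hpi : I p₁ l
      · rw [dist_pl_inc hpi, dist_pl_inc ((htr l hl).mp hpi)]
      · rw [dist_pl_not_inc hBA hq hpi,
          dist_pl_not_inc hBA hq (fun h => hpi ((htr l hl).mpr h))]
  exact Sum.inl.inj key

end Res
section Count
set_option linter.unusedSectionVars false
open Finset
open scoped Classical

variable {Pt Ln : Type*} [Fintype Pt] [Fintype Ln] {q : ℕ} {I : Pt → Ln → Prop}
  {dir : Ln → Fin q} {cls : Pt → Fin q} {PS : Set Pt} {LS : Set Ln}

lemma lemA (hBA : IsBiaffinePlane q I dir cls) (hq : 2 ≤ q)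
    (hres : IsResolvingSet (IncGraph I) (Sum.inl '' PS ∪ Sum.inr '' LS)) :
    2 * ({d : Fin q | ∀ l ∈ LS, dir l ≠ d}.ncard * q) ≤
    ({d : Fin q | ∀ l ∈ LS, dir l ≠ d}.ncard + 1) * PS.ncard + 2 := by
  have e1 : {d : Fin q | ∀ l ∈ LS, dir l ≠ d}.ncard
      = (Finset.univ.filter (fun d : Fin q => ∀ l ∈ LS, dir l ≠ d)).card :=
    auxFilterCardEq _
  have e2 : PS.ncard = (Finset.univ.filter (· ∈ PS)).card := by
    have := auxFilterCardEq (· ∈ PS); rwa [Set.setOf_mem_eq] at this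
  rw [e1, e2]
  set U := Finset.univ.filter (fun d : Fin q => ∀ l ∈ LS, dir l ≠ d) with hU
  set PSf := Finset.univ.filter (· ∈ PS) with hPSf
  set L := Finset.univ.filter (fun l : Ln => dir l ∈ U) with hL
  set t := fun l : Ln => (PSf.filter (fun p => I p l)).card with ht
  have hmemPSf : ∀ p, p ∈ PSf ↔ p ∈ PS := by
    intro p; rw [hPSf, Finset.mem_filter]; simp
  have huncov : ∀ l₀ ∈ L, ∀ l ∈ LS, dir l ≠ dir l₀ := by
    intro l₀ hl₀
    have := (Finset.mem_filter.mp hl₀).2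
    exact (Finset.mem_filter.mp this).2
  -- (1) |L| = |U| * q
  have hLcard : L.card = U.card * q := by
    have hb : L = U.biUnion (fun d => Finset.univ.filter (fun l => dir l = d)) := by
      ext l
      simp only [hL, Finset.mem_filter, Finset.mem_univ, true_and, Finset.mem_biUnion]
      constructor
      · intro h; exact ⟨dir l, h, by simp⟩
      · rintro ⟨d, hd, hld⟩
        have : dir l = d := by simpa using hld
        rw [this]; exact hd
    rw [hb, Finset.card_biUnion, Finset.sum_congr rfl (fun d _ => card_dir_fiber hBA hq d),
      Finset.sum_const, smul_eq_mul]
    intro d₁ _ d₂ _ hne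
    rw [Function.onFun, Finset.disjoint_left]
    intro l h₁ h₂
    exact hne (((Finset.mem_filter.mp h₁).2.symm).trans (Finset.mem_filter.mp h₂).2)
  -- (2) ∑ t = |U| * |PSf|
  have hsum : ∑ l ∈ L, t l = U.card * PSf.card := by
    rw [ht]
    rw [auxSumCardFilterComm L PSf (fun l p => I p l)]
    have hinner : ∀ p : Pt, (L.filter (fun l => I p l)).card = U.card := by
      intro p
      apply Finset.card_bij (fun l _ => dir l)
      · intro l hl
        exact (Finset.mem_filter.mp (Finset.mem_filter.mp hl).1).2
      · intro l₁ h₁ l₂ h₂ hd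
        obtain ⟨l₀, _, hu⟩ := line_thru_dir hBA p (dir l₁)
        rw [hu l₁ ⟨(Finset.mem_filter.mp h₁).2, rfl⟩, hu l₂ ⟨(Finset.mem_filter.mp h₂).2, hd.symm⟩]
      · intro d hd
        obtain ⟨l, ⟨hIl, hld⟩, _⟩ := line_thru_dir hBA p d
        refine ⟨l, Finset.mem_filter.mpr ⟨Finset.mem_filter.mpr ⟨Finset.mem_univ l, ?_⟩, hIl⟩, hld⟩
        rw [hld]; exact hd
    rw [Finset.sum_congr rfl (fun p _ => hinner p), Finset.sum_const, smul_eq_mul, mul_comm]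
  -- helpers
  have hempty : ∀ l, t l = 0 → ∀ p ∈ PS, ¬ I p l := by
    intro l h0 p hp hI
    have h1 : p ∈ PSf.filter (fun p => I p l) :=
      Finset.mem_filter.mpr ⟨(hmemPSf p).mpr hp, hI⟩
    rw [Finset.card_eq_zero.mp h0] at h1
    exact absurd h1 (Finset.notMem_empty p)
  -- (3) at most one empty-trace line
  set E := L.filter (fun l => t l = 0) with hE
  have hEcard : E.card ≤ 1 := by
    rw [Finset.card_le_one]
    intro a ha b hb
    have ha' := Finset.mem_filter.mp ha
    have hb' := Finset.mem_filter.mp hb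
    apply resolve_lines hBA hq hres (huncov a ha'.1) (huncov b hb'.1)
    intro p hp
    exact ⟨fun hI => absurd hI (hempty a ha'.2 p hp),
           fun hI => absurd hI (hempty b hb'.2 p hp)⟩
  -- (4) singleton-trace lines ≤ |PSf|
  have hNe : Nonempty Pt := by
    have hc := card_univ_Pt hBA
    rw [Finset.card_univ] at hc
    apply Fintype.card_pos_iff.mp
    rw [hc]
    have : 0 < q := by omega
    positivity
  set f := fun l : Ln => if h : (PSf.filter (fun p => I p l)).card = 1 then
      (Finset.card_eq_one.mp h).choose else Classical.arbitrary Pt with hf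
  have hfspec : ∀ l, t l = 1 → PSf.filter (fun p => I p l) = {f l} := by
    intro l h1
    have h1' : (PSf.filter (fun p => I p l)).card = 1 := h1
    rw [hf]; dsimp only; rw [dif_pos h1']
    exact (Finset.card_eq_one.mp h1').choose_spec
  set S1 := L.filter (fun l => t l = 1) with hS1def
  have hS1 : S1.card ≤ PSf.card := by
    apply Finset.card_le_card_of_injOn f
    · intro l hl
      have h1 := (Finset.mem_filter.mp hl).2
      have hfl : f l ∈ PSf.filter (fun p => I p l) := by
        rw [hfspec l h1]; exact Finset.mem_singleton_self _
      exact (Finset.mem_filter.mp hfl).1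
    · intro l₁ h₁ l₂ h₂ heq
      have h₁' := Finset.mem_filter.mp (Finset.mem_coe.mp h₁)
      have h₂' := Finset.mem_filter.mp (Finset.mem_coe.mp h₂)
      apply resolve_lines hBA hq hres (huncov l₁ h₁'.1) (huncov l₂ h₂'.1)
      intro p hp
      constructor
      · intro hI
        have hm : p ∈ PSf.filter (fun p => I p l₁) :=
          Finset.mem_filter.mpr ⟨(hmemPSf p).mpr hp, hI⟩
        rw [hfspec l₁ h₁'.2, Finset.mem_singleton] at hm
        have : p ∈ PSf.filter (fun p => I p l₂) := by
          rw [hfspec l₂ h₂'.2, Finset.mem_singleton, hm, heq]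
        exact (Finset.mem_filter.mp this).2
      · intro hI
        have hm : p ∈ PSf.filter (fun p => I p l₂) :=
          Finset.mem_filter.mpr ⟨(hmemPSf p).mpr hp, hI⟩
        rw [hfspec l₂ h₂'.2, Finset.mem_singleton] at hm
        have : p ∈ PSf.filter (fun p => I p l₁) := by
          rw [hfspec l₁ h₁'.2, Finset.mem_singleton, hm, heq]
        exact (Finset.mem_filter.mp this).2
  -- (5)+(6) sum up
  have hpt : ∀ l ∈ L, 2 ≤ t l + (2 * (if t l = 0 then 1 else 0) + (if t l = 1 then 1 else 0)) := by
    intro l _; split_ifs <;> omega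
  have hsum2 : 2 * L.card ≤ (∑ l ∈ L, t l) + (2 * E.card + S1.card) := by
    have h := Finset.sum_le_sum hpt
    rw [Finset.sum_const, smul_eq_mul] at h
    rw [Finset.sum_add_distrib, Finset.sum_add_distrib, ← Finset.mul_sum,
      ← Finset.card_filter, ← Finset.card_filter] at h
    rw [mul_comm]; exact h
  have hexp : (U.card + 1) * PSf.card = U.card * PSf.card + PSf.card := by ring
  rw [hexp]
  calc 2 * (U.card * q) = 2 * L.card := by rw [hLcard]
    _ ≤ (∑ l ∈ L, t l) + (2 * E.card + S1.card) := hsum2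
    _ ≤ U.card * PSf.card + (2 * 1 + PSf.card) := by
        rw [hsum]
        have := hEcard; have := hS1; omega
    _ = U.card * PSf.card + PSf.card + 2 := by ring

lemma lemB (hBA : IsBiaffinePlane q I dir cls) (hq : 2 ≤ q)
    (hres : IsResolvingSet (IncGraph I) (Sum.inl '' PS ∪ Sum.inr '' LS)) :
    2 * ({d : Fin q | ∀ p ∈ PS, cls p ≠ d}.ncard * q) ≤
    ({d : Fin q | ∀ p ∈ PS, cls p ≠ d}.ncard + 1) * LS.ncard + 2 := by
  have e1 : {d : Fin q | ∀ p ∈ PS, cls p ≠ d}.ncard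
      = (Finset.univ.filter (fun d : Fin q => ∀ p ∈ PS, cls p ≠ d)).card :=
    auxFilterCardEq _
  have e2 : LS.ncard = (Finset.univ.filter (· ∈ LS)).card := by
    have := auxFilterCardEq (· ∈ LS); rwa [Set.setOf_mem_eq] at this
  rw [e1, e2]
  set U := Finset.univ.filter (fun d : Fin q => ∀ p ∈ PS, cls p ≠ d) with hU
  set LSf := Finset.univ.filter (· ∈ LS) with hLSf
  set L := Finset.univ.filter (fun p : Pt => cls p ∈ U) with hL
  set t := fun p : Pt => (LSf.filter (fun l => I p l)).card with ht
  have hmemLSf : ∀ l, l ∈ LSf ↔ l ∈ LS := by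
    intro l; rw [hLSf, Finset.mem_filter]; simp
  have huncov : ∀ p₀ ∈ L, ∀ p ∈ PS, cls p ≠ cls p₀ := by
    intro p₀ hp₀
    have := (Finset.mem_filter.mp hp₀).2
    exact (Finset.mem_filter.mp this).2
  have hLcard : L.card = U.card * q := by
    have hb : L = U.biUnion (fun d => Finset.univ.filter (fun p => cls p = d)) := by
      ext p
      simp only [hL, Finset.mem_filter, Finset.mem_univ, true_and, Finset.mem_biUnion]
      constructor
      · intro h; exact ⟨cls p, h, by simp⟩
      · rintro ⟨d, hd, hpd⟩
        have : cls p = d := by simpa using hpd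
        rw [this]; exact hd
    rw [hb, Finset.card_biUnion, Finset.sum_congr rfl (fun d _ => card_cls_fiber hBA hq d),
      Finset.sum_const, smul_eq_mul]
    intro d₁ _ d₂ _ hne
    rw [Function.onFun, Finset.disjoint_left]
    intro p h₁ h₂
    exact hne (((Finset.mem_filter.mp h₁).2.symm).trans (Finset.mem_filter.mp h₂).2)
  have hsum : ∑ p ∈ L, t p = U.card * LSf.card := by
    rw [ht]
    rw [auxSumCardFilterComm L LSf (fun p l => I p l)]
    have hinner : ∀ l : Ln, (L.filter (fun p => I p l)).card = U.card := by
      intro l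
      apply Finset.card_bij (fun p _ => cls p)
      · intro p hp
        exact (Finset.mem_filter.mp (Finset.mem_filter.mp hp).1).2
      · intro p₁ h₁ p₂ h₂ hd
        obtain ⟨p₀, _, hu⟩ := pt_on_cls hBA l (cls p₁)
        rw [hu p₁ ⟨(Finset.mem_filter.mp h₁).2, rfl⟩, hu p₂ ⟨(Finset.mem_filter.mp h₂).2, hd.symm⟩]
      · intro d hd
        obtain ⟨p, ⟨hIp, hpd⟩, _⟩ := pt_on_cls hBA l d
        refine ⟨p, Finset.mem_filter.mpr ⟨Finset.mem_filter.mpr ⟨Finset.mem_univ p, ?_⟩, hIp⟩, hpd⟩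
        rw [hpd]; exact hd
    rw [Finset.sum_congr rfl (fun l _ => hinner l), Finset.sum_const, smul_eq_mul, mul_comm]
  have hempty : ∀ p, t p = 0 → ∀ l ∈ LS, ¬ I p l := by
    intro p h0 l hl hI
    have h1 : l ∈ LSf.filter (fun l => I p l) :=
      Finset.mem_filter.mpr ⟨(hmemLSf l).mpr hl, hI⟩
    rw [Finset.card_eq_zero.mp h0] at h1
    exact absurd h1 (Finset.notMem_empty l)
  set E := L.filter (fun p => t p = 0) with hE
  have hEcard : E.card ≤ 1 := by
    rw [Finset.card_le_one]
    intro a ha b hb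
    have ha' := Finset.mem_filter.mp ha
    have hb' := Finset.mem_filter.mp hb
    apply resolve_points hBA hq hres (huncov a ha'.1) (huncov b hb'.1)
    intro l hl
    exact ⟨fun hI => absurd hI (hempty a ha'.2 l hl),
           fun hI => absurd hI (hempty b hb'.2 l hl)⟩
  have hNe : Nonempty Ln := by
    have hc := card_univ_Ln hBA
    rw [Finset.card_univ] at hc
    apply Fintype.card_pos_iff.mp
    rw [hc]
    have : 0 < q := by omega
    positivity
  set f := fun p : Pt => if h : (LSf.filter (fun l => I p l)).card = 1 then
      (Finset.card_eq_one.mp h).choose else Classical.arbitrary Ln with hf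
  have hfspec : ∀ p, t p = 1 → LSf.filter (fun l => I p l) = {f p} := by
    intro p h1
    have h1' : (LSf.filter (fun l => I p l)).card = 1 := h1
    rw [hf]; dsimp only; rw [dif_pos h1']
    exact (Finset.card_eq_one.mp h1').choose_spec
  set S1 := L.filter (fun p => t p = 1) with hS1def
  have hS1 : S1.card ≤ LSf.card := by
    apply Finset.card_le_card_of_injOn f
    · intro p hp
      have h1 := (Finset.mem_filter.mp hp).2
      have hfp : f p ∈ LSf.filter (fun l => I p l) := by
        rw [hfspec p h1]; exact Finset.mem_singleton_self _
      exact (Finset.mem_filter.mp hfp).1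
    · intro p₁ h₁ p₂ h₂ heq
      have h₁' := Finset.mem_filter.mp (Finset.mem_coe.mp h₁)
      have h₂' := Finset.mem_filter.mp (Finset.mem_coe.mp h₂)
      apply resolve_points hBA hq hres (huncov p₁ h₁'.1) (huncov p₂ h₂'.1)
      intro l hl
      constructor
      · intro hI
        have hm : l ∈ LSf.filter (fun l => I p₁ l) :=
          Finset.mem_filter.mpr ⟨(hmemLSf l).mpr hl, hI⟩
        rw [hfspec p₁ h₁'.2, Finset.mem_singleton] at hm
        have : l ∈ LSf.filter (fun l => I p₂ l) := by
          rw [hfspec p₂ h₂'.2, Finset.mem_singleton, hm, heq]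
        exact (Finset.mem_filter.mp this).2
      · intro hI
        have hm : l ∈ LSf.filter (fun l => I p₂ l) :=
          Finset.mem_filter.mpr ⟨(hmemLSf l).mpr hl, hI⟩
        rw [hfspec p₂ h₂'.2, Finset.mem_singleton] at hm
        have : l ∈ LSf.filter (fun l => I p₁ l) := by
          rw [hfspec p₁ h₁'.2, Finset.mem_singleton, hm, heq]
        exact (Finset.mem_filter.mp this).2
  have hpt : ∀ p ∈ L, 2 ≤ t p + (2 * (if t p = 0 then 1 else 0) + (if t p = 1 then 1 else 0)) := by
    intro p _; split_ifs <;> omega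
  have hsum2 : 2 * L.card ≤ (∑ p ∈ L, t p) + (2 * E.card + S1.card) := by
    have h := Finset.sum_le_sum hpt
    rw [Finset.sum_const, smul_eq_mul] at h
    rw [Finset.sum_add_distrib, Finset.sum_add_distrib, ← Finset.mul_sum,
      ← Finset.card_filter, ← Finset.card_filter] at h
    rw [mul_comm]; exact h
  have hexp : (U.card + 1) * LSf.card = U.card * LSf.card + LSf.card := by ring
  rw [hexp]
  calc 2 * (U.card * q) = 2 * L.card := by rw [hLcard]
    _ ≤ (∑ p ∈ L, t p) + (2 * E.card + S1.card) := hsum2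
    _ ≤ U.card * LSf.card + (2 * 1 + LSf.card) := by
        rw [hsum]
        have := hEcard; have := hS1; omega
    _ = U.card * LSf.card + LSf.card + 2 := by ring

lemma lemC (hBA : IsBiaffinePlane q I dir cls) (hq : 2 ≤ q)
    (hres : IsResolvingSet (IncGraph I) (Sum.inl '' PS ∪ Sum.inr '' LS)) :
    q * q ≤ q * PS.ncard + LS.ncard + q := by
  have e2 : PS.ncard = (Finset.univ.filter (· ∈ PS)).card := by
    have := auxFilterCardEq (· ∈ PS); rwa [Set.setOf_mem_eq] at this
  have e3 : LS.ncard = (Finset.univ.filter (· ∈ LS)).card := by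
    have := auxFilterCardEq (· ∈ LS); rwa [Set.setOf_mem_eq] at this
  rw [e2, e3]
  set PSf := Finset.univ.filter (· ∈ PS) with hPSf
  set LSf := Finset.univ.filter (· ∈ LS) with hLSf
  set T := Finset.univ.filter (fun l : Ln => ∃ p ∈ PS, I p l) with hT
  have hTcard : T.card ≤ PSf.card * q := by
    have hsub : T ⊆ PSf.biUnion (fun p => Finset.univ.filter (fun l => I p l)) := by
      intro l hl
      obtain ⟨p, hp, hI⟩ := (Finset.mem_filter.mp hl).2
      exact Finset.mem_biUnion.mpr ⟨p, Finset.mem_filter.mpr ⟨Finset.mem_univ _, hp⟩,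
        Finset.mem_filter.mpr ⟨Finset.mem_univ _, hI⟩⟩
    calc T.card ≤ (PSf.biUnion (fun p => Finset.univ.filter (fun l => I p l))).card :=
          Finset.card_le_card hsub
      _ ≤ ∑ p ∈ PSf, (Finset.univ.filter (fun l => I p l)).card := Finset.card_biUnion_le
      _ = ∑ p ∈ PSf, q := Finset.sum_congr rfl (fun p _ => card_lns_thru_pt hBA p)
      _ = PSf.card * q := by rw [Finset.sum_const, smul_eq_mul]
  set Unt := Finset.univ.filter (fun l : Ln => l ∉ LS ∧ ∀ p ∈ PS, ¬ I p l) with hUnt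
  have hUntcard : Unt.card ≤ q := by
    have h := Finset.card_le_card_of_injOn (s := Unt) (t := Finset.univ) dir (fun l _ => Finset.mem_univ (dir l)) ?_
    · rwa [Finset.card_univ, Fintype.card_fin] at h
    · intro l₁ h₁ l₂ h₂ hd
      have h₁' := (Finset.mem_filter.mp (Finset.mem_coe.mp h₁)).2
      have h₂' := (Finset.mem_filter.mp (Finset.mem_coe.mp h₂)).2
      exact resolve_untouched hBA hq hres h₁'.1 h₂'.1 hd h₁'.2 h₂'.2
  have hcover : (Finset.univ : Finset Ln) ⊆ T ∪ LSf ∪ Unt := by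
    intro l _
    simp only [Finset.mem_union, hT, hLSf, hUnt, Finset.mem_filter, Finset.mem_univ, true_and]
    by_cases h1 : ∃ p ∈ PS, I p l
    · exact Or.inl (Or.inl h1)
    · push_neg at h1
      by_cases h2 : l ∈ LS
      · exact Or.inl (Or.inr h2)
      · exact Or.inr ⟨h2, h1⟩
  have hmain : q ^ 2 ≤ T.card + LSf.card + Unt.card := by
    calc q ^ 2 = (Finset.univ : Finset Ln).card := (card_univ_Ln hBA).symm
      _ ≤ (T ∪ LSf ∪ Unt).card := Finset.card_le_card hcover
      _ ≤ (T ∪ LSf).card + Unt.card := Finset.card_union_le _ _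
      _ ≤ T.card + LSf.card + Unt.card := by
          have := Finset.card_union_le T LSf; omega
  have hsq : q ^ 2 = q * q := sq q
  rw [hsq] at hmain
  have : PSf.card * q = q * PSf.card := mul_comm _ _
  omega

end Count

set_option maxHeartbeats 1000000 in
/-- Let `S = P_S ∪ L_S` be a resolving set for a biaffine plane of order `q` with
`|P_S| ≤ |L_S|`, let `u` be the number of uncovered directions and `c` the number of
unblocked classes. If `|S| < 3(q-1)` then `u ≤ 2`; if `|S| < (8/3)(q-1)` then `u ≤ 1`;
if `|S| < (8/3)(q-1) - 1` then `c ≤ 4`. -/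
theorem biaffine_u_c_small {Pt Ln : Type*} [Fintype Pt] [Fintype Ln]
    (q : ℕ) (hq : 2 ≤ q) (I : Pt → Ln → Prop) (dir : Ln → Fin q) (cls : Pt → Fin q)
    (hBA : IsBiaffinePlane q I dir cls)
    (PS : Set Pt) (LS : Set Ln) (hPL : PS.ncard ≤ LS.ncard)
    (hres : IsResolvingSet (IncGraph I) (Sum.inl '' PS ∪ Sum.inr '' LS))
    (u c : ℕ)
    (hu : u = {d : Fin q | ∀ l ∈ LS, dir l ≠ d}.ncard)
    (hc : c = {d : Fin q | ∀ p ∈ PS, cls p ≠ d}.ncard) :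
    (((PS.ncard : ℝ) + LS.ncard < 3 * (q - 1)) → u ≤ 2) ∧
    (((PS.ncard : ℝ) + LS.ncard < 8 / 3 * (q - 1)) → u ≤ 1) ∧
    (((PS.ncard : ℝ) + LS.ncard < 8 / 3 * (q - 1) - 1) → c ≤ 4) := by
  classical
  have hA := lemA hBA hq hres
  have hB := lemB hBA hq hres
  have hC := lemC hBA hq hres
  rw [← hu] at hA
  rw [← hc] at hB
  set P := PS.ncard with hP
  set L := LS.ncard with hL
  have hAr : (2:ℝ) * (u * q) ≤ (u + 1) * P + 2 := by exact_mod_cast hA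
  have hBr : (2:ℝ) * (c * q) ≤ (c + 1) * L + 2 := by exact_mod_cast hB
  have hCr : (q:ℝ) * q ≤ q * P + L + q := by exact_mod_cast hC
  have hPLr : (P:ℝ) ≤ L := by exact_mod_cast hPL
  have hqr : (2:ℝ) ≤ q := by exact_mod_cast hq
  have hLnn : (0:ℝ) ≤ L := by positivity
  refine ⟨?_, ?_, ?_⟩
  · intro hS
    by_contra hcon
    push_neg at hcon
    have hu3 : (3:ℝ) ≤ u := by exact_mod_cast hcon
    have h2P : 2 * (P:ℝ) < 3 * (q - 1) := by linarith
    nlinarith [mul_lt_mul_of_pos_left h2P (show (0:ℝ) < u + 1 by positivity), hAr,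
      mul_nonneg (by linarith : (0:ℝ) ≤ (u:ℝ) - 3) (by linarith : (0:ℝ) ≤ (q:ℝ) - 1)]
  · intro hS
    by_contra hcon
    push_neg at hcon
    have hu2 : (2:ℝ) ≤ u := by exact_mod_cast hcon
    have h2P : 2 * (P:ℝ) < 8 / 3 * (q - 1) := by linarith
    nlinarith [mul_lt_mul_of_pos_left h2P (show (0:ℝ) < u + 1 by positivity), hAr,
      mul_nonneg (by linarith : (0:ℝ) ≤ (u:ℝ) - 2) (by linarith : (0:ℝ) ≤ (q:ℝ) - 1)]
  · intro hS
    by_contra hcon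
    push_neg at hcon
    have hc5 : (5:ℝ) ≤ c := by exact_mod_cast hcon
    have hqpos : (0:ℝ) < q := by linarith
    have h6L : 10 * (q:ℝ) - 2 ≤ 6 * L := by
      nlinarith [hBr, mul_nonneg (by linarith : (0:ℝ) ≤ (c:ℝ) - 5)
        (by linarith : (0:ℝ) ≤ (q:ℝ) + 1), hLnn]
    have hmul := mul_lt_mul_of_pos_left hS hqpos
    have hiL : 6 * ((q:ℝ) - 1) * L < 10 * q ^ 2 - 16 * q := by nlinarith [hmul, hCr]
    have hfin : ((q:ℝ) - 1) * (10 * (q:ℝ) - 2) ≤ ((q:ℝ) - 1) * (6 * (L:ℝ)) :=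
      mul_le_mul_of_nonneg_left h6L (by linarith : (0:ℝ) ≤ (q:ℝ) - 1)
    nlinarith [hfin, hiL, hqr]
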